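/- Let R = ℚ[y,z] with the ring endomorphism σ fixing ℚ and sending y ↦ 2y, z ↦ 2z. Then: (1) R^σ = ℚ; (2) for all integers i,j ≥ 0, σ^i(y)σ^j(z) − σ^i(z)σ^j(y) = 0; yet (3) y and z are linearly independent over ℚ. Hence the Casoratian-determinant criterion for linear dependence over constants fails when the σ-ring is not σ-simple. -/

import Mathlib

open MvPolynomial

noncomputable def sigma4 : MvPolynomial (Fin 2) ℚ →ₐ[ℚ] MvPolynomial (Fin 2) ℚ :=
  MvPolynomial.aeval (fun i => (MvPolynomial.C 2) * MvPolynomial.X i)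

lemma sigma4_monomial (n : Fin 2 →₀ ℕ) (a : ℚ) :
    sigma4 (monomial n a) = monomial n ((2 : ℚ) ^ (n.sum fun _ e => e) * a) := by
  rw [sigma4, aeval_monomial]
  have h1 : (n.prod fun i k => ((C 2 : MvPolynomial (Fin 2) ℚ) * X i) ^ k)
      = (C ((2:ℚ) ^ (n.sum fun _ e => e))) * n.prod fun i k => (X i : MvPolynomial (Fin 2) ℚ) ^ k := by
    simp only [Finsupp.prod, Finsupp.sum, ← Finset.prod_pow_eq_pow_sum,
      ← Finset.prod_mul_distrib, mul_pow, map_prod, map_pow]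
  rw [h1, monomial_eq, algebraMap_eq, map_mul]
  ring

lemma coeff_sigma4 (r : MvPolynomial (Fin 2) ℚ) (m : Fin 2 →₀ ℕ) :
    coeff m (sigma4 r) = (2 : ℚ) ^ (m.sum fun _ e => e) * coeff m r := by
  induction r using MvPolynomial.induction_on' with
  | monomial n a =>
    rw [sigma4_monomial, coeff_monomial, coeff_monomial]
    split
    · next h => subst h; ring
    · ring
  | add p q hp hq => simp [map_add, hp, hq, mul_add]

lemma sigma4_C (q : ℚ) : sigma4 (C q) = C q := by
  simp [sigma4, algebraMap_eq]

lemma iter_sigma4_X (i : ℕ) (k : Fin 2) :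
    (⇑sigma4)^[i] (X k) = C ((2:ℚ)^i) * X k := by
  induction i with
  | zero => simp
  | succ n ih =>
    rw [Function.iterate_succ_apply', ih, map_mul, sigma4_C]
    simp only [sigma4, aeval_X]
    rw [pow_succ, map_mul]
    ring

theorem stmt_4 :
    (∀ r : MvPolynomial (Fin 2) ℚ, sigma4 r = r → ∃ q : ℚ, r = MvPolynomial.C q) ∧
    (∀ i j : ℕ,
      (⇑sigma4)^[i] (MvPolynomial.X 0) * (⇑sigma4)^[j] (MvPolynomial.X 1) -
        (⇑sigma4)^[i] (MvPolynomial.X 1) * (⇑sigma4)^[j] (MvPolynomial.X 0) = 0) ∧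
    (∀ a b : ℚ,
      MvPolynomial.C a * MvPolynomial.X 0 + MvPolynomial.C b * MvPolynomial.X 1 = 0 →
      a = 0 ∧ b = 0) := by
  refine ⟨?_, ?_, ?_⟩
  · intro r h
    refine ⟨coeff 0 r, ?_⟩
    ext m
    rw [coeff_C]
    split
    · next h0 => rw [← h0]
    · next h0 =>
      have hc := coeff_sigma4 r m
      rw [h] at hc
      have hd : (m.sum fun _ e => e) ≠ 0 := by
        intro hz
        rw [Finsupp.sum, Finset.sum_eq_zero_iff] at hz
        apply h0
        symm; ext i
        by_cases hi : m i = 0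
        · simpa using hi
        · exact absurd (hz i (Finsupp.mem_support_iff.2 hi)) hi
      have h2 : (1:ℚ) < 2 ^ (m.sum fun _ e => e) := one_lt_pow₀ one_lt_two hd
      nlinarith [hc]
  · intro i j
    rw [iter_sigma4_X, iter_sigma4_X, iter_sigma4_X, iter_sigma4_X]
    ring
  · intro a b h
    constructor
    · have := congrArg (coeff (Finsupp.single 0 1)) h
      simpa [coeff_X', Finsupp.single_eq_single_iff] using this
    · have := congrArg (coeff (Finsupp.single 1 1)) h
      simpa [coeff_X', Finsupp.single_eq_single_iff] using this
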